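/- Let ρ be the path defined by ρ(0) = λ and, for t ∈ (0,T], by the density y ↦ ∫_{[0,∞)} k_{J(t)}(x,y) λ(dx) with respect to Lebesgue measure on [0,∞). Then for every t ∈ [0,T], the first moment of ρ(t) equals ∫_{[0,∞)} y ρ(t)(dy) = m_λ e^{ηt/2}. -/

import Mathlib

open MeasureTheory Set

/-- The transition kernel
`k_J(x,y) = (2/J) e^{−2(x+y)/J} Σ_{n≥0} 2^{2n+η−1} xⁿ y^{n+η−1} / (J^{2n+η−1} n! Γ(n+η))`,
which for `x > 0` equals `(2/J) (y/x)^{(η−1)/2} e^{−2(x+y)/J} I_{η−1}(4√(xy)/J)`. -/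
noncomputable def besselKernel (η J x y : ℝ) : ℝ :=
  (2 / J) * Real.exp (-2 * (x + y) / J) *
    ∑' n : ℕ, (2:ℝ) ^ (2 * (n:ℝ) + η - 1) * x ^ n * y ^ ((n:ℝ) + η - 1) /
      (J ^ (2 * (n:ℝ) + η - 1) * (n.factorial : ℝ) * Real.Gamma ((n:ℝ) + η))

/-- The measure on `[0,∞)` with density `y ↦ ∫ k_J(x,y) λ(dx)` with respect to Lebesgue
measure on `[0,∞)`. -/
noncomputable def solMeasure (η : ℝ) (lam : Measure ℝ) (J : ℝ) : Measure ℝ :=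
  (volume.restrict (Set.Ici (0:ℝ))).withDensity
    fun y => ENNReal.ofReal (∫ x, besselKernel η J x y ∂lam)

namespace BesselProof

open scoped ENNReal

noncomputable def kt (η c x y : ℝ) (n : ℕ) : ℝ :=
  c ^ (2 * (n:ℝ) + η - 1) * x ^ n * y ^ ((n:ℝ) + η - 1) /
    ((n.factorial : ℝ) * Real.Gamma ((n:ℝ) + η))

lemma exp_tsum (u : ℝ) : Real.exp u = ∑' n : ℕ, u ^ n / (n.factorial : ℝ) := by
  rw [Real.exp_eq_exp_ℝ, NormedSpace.exp_eq_tsum_div]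

variable {η c J x y : ℝ} {n : ℕ}

lemma gamma_pos (hη : 1 < η) (n : ℕ) : 0 < Real.Gamma ((n:ℝ) + η) :=
  Real.Gamma_pos_of_pos (by have := Nat.cast_nonneg (α := ℝ) n; linarith)

lemma gamma_ge (hη : 1 < η) : ∀ n : ℕ, (n.factorial : ℝ) * Real.Gamma η ≤ Real.Gamma ((n:ℝ) + η) := by
  intro n
  induction n with
  | zero => simp
  | succ n ih =>
    have hn0 : (0:ℝ) ≤ (n:ℝ) := Nat.cast_nonneg n
    have hne : ((n:ℝ) + η) ≠ 0 := by linarith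
    have hgadd : Real.Gamma ((n:ℝ) + η + 1) = ((n:ℝ) + η) * Real.Gamma ((n:ℝ) + η) :=
      Real.Gamma_add_one hne
    have hcast : ((n:ℝ) + 1) + η = (n:ℝ) + η + 1 := by ring
    have hgp := gamma_pos hη n
    calc ((n+1).factorial : ℝ) * Real.Gamma η
        = ((n:ℝ) + 1) * ((n.factorial : ℝ) * Real.Gamma η) := by
          rw [Nat.factorial_succ]; push_cast; ring
      _ ≤ ((n:ℝ) + 1) * Real.Gamma ((n:ℝ) + η) := by
          apply mul_le_mul_of_nonneg_left ih; linarith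
      _ ≤ ((n:ℝ) + η) * Real.Gamma ((n:ℝ) + η) := by
          apply mul_le_mul_of_nonneg_right _ hgp.le; linarith
      _ = Real.Gamma (((n:ℕ):ℝ) + 1 + η) := by rw [hcast, hgadd]
      _ = Real.Gamma ((((n+1):ℕ):ℝ) + η) := by push_cast; ring_nf

lemma kt_eq (hη : 1 < η) (hc : 0 < c) (hy : 0 ≤ y) :
    kt η c x y n = (c ^ (η-1) * y ^ (η-1)) * ((c*x)^n * (c*y)^n) /
      ((n.factorial : ℝ) * Real.Gamma ((n:ℝ) + η)) := by
  unfold kt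
  have h1 : c ^ (2*(n:ℝ)+η-1) = (c^2)^n * c^(η-1) := by
    rw [show 2*(n:ℝ)+η-1 = (2*(n:ℝ)) + (η-1) by ring, Real.rpow_add hc,
        show (2:ℝ)*(n:ℝ) = ((2*n : ℕ):ℝ) by push_cast; ring, Real.rpow_natCast, pow_mul]
  have h2 : y ^ ((n:ℝ)+η-1) = y^n * y^(η-1) := by
    rw [show (n:ℝ)+η-1 = (n:ℝ) + (η-1) by ring,
        Real.rpow_add_of_nonneg hy (Nat.cast_nonneg n) (by linarith), Real.rpow_natCast]
  rw [h1, h2, mul_pow, mul_pow]; ring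

lemma kt_nonneg (hη : 1 < η) (hc : 0 < c) (hx : 0 ≤ x) (hy : 0 ≤ y) :
    0 ≤ kt η c x y n := by
  unfold kt
  apply div_nonneg
  · exact mul_nonneg (mul_nonneg (Real.rpow_nonneg hc.le _) (pow_nonneg hx n))
      (Real.rpow_nonneg hy _)
  · exact mul_nonneg (Nat.cast_nonneg _) (gamma_pos hη n).le

lemma kt_le (hη : 1 < η) (hc : 0 < c) (hx : 0 ≤ x) (hy : 0 ≤ y) :
    kt η c x y n ≤ (c ^ (η-1) * y ^ (η-1) / Real.Gamma η) *
      ((c*x)^n / (n.factorial : ℝ)) * ((c*y)^n / (n.factorial : ℝ)) := by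
  rw [kt_eq hη hc hy]
  have hnum : 0 ≤ (c ^ (η-1) * y ^ (η-1)) * ((c*x)^n * (c*y)^n) := by
    apply mul_nonneg (mul_nonneg (Real.rpow_nonneg hc.le _) (Real.rpow_nonneg hy _))
    exact mul_nonneg (pow_nonneg (by positivity) n) (pow_nonneg (by positivity) n)
  have hfp : (0:ℝ) < (n.factorial : ℝ) := by exact_mod_cast Nat.factorial_pos n
  have hgη : (0:ℝ) < Real.Gamma η := Real.Gamma_pos_of_pos (by linarith)
  have hle : (n.factorial : ℝ) * ((n.factorial : ℝ) * Real.Gamma η) ≤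
      (n.factorial : ℝ) * Real.Gamma ((n:ℝ) + η) :=
    mul_le_mul_of_nonneg_left (gamma_ge hη n) hfp.le
  calc (c ^ (η-1) * y ^ (η-1)) * ((c*x)^n * (c*y)^n) / ((n.factorial : ℝ) * Real.Gamma ((n:ℝ) + η))
      ≤ (c ^ (η-1) * y ^ (η-1)) * ((c*x)^n * (c*y)^n) /
        ((n.factorial : ℝ) * ((n.factorial : ℝ) * Real.Gamma η)) := by
        apply div_le_div_of_nonneg_left hnum (by positivity) hle
    _ = (c ^ (η-1) * y ^ (η-1) / Real.Gamma η) *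
      ((c*x)^n / (n.factorial : ℝ)) * ((c*y)^n / (n.factorial : ℝ)) := by
        field_simp

lemma pow_div_factorial_le_exp (u : ℝ) (hu : 0 ≤ u) (n : ℕ) :
    u ^ n / (n.factorial : ℝ) ≤ Real.exp u := by
  rw [exp_tsum]
  exact Summable.le_tsum (Real.summable_pow_div_factorial u) n (fun j _ => by positivity)

lemma kt_le_simple (hη : 1 < η) (hc : 0 < c) (hx : 0 ≤ x) (hy : 0 ≤ y) :
    kt η c x y n ≤ (c ^ (η-1) * y ^ (η-1) / Real.Gamma η * Real.exp (c*y)) *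
      ((c*x)^n / (n.factorial : ℝ)) := by
  have hgη : (0:ℝ) < Real.Gamma η := Real.Gamma_pos_of_pos (by linarith)
  calc kt η c x y n ≤ (c ^ (η-1) * y ^ (η-1) / Real.Gamma η) *
      ((c*x)^n / (n.factorial : ℝ)) * ((c*y)^n / (n.factorial : ℝ)) := kt_le hη hc hx hy
    _ ≤ (c ^ (η-1) * y ^ (η-1) / Real.Gamma η) *
      ((c*x)^n / (n.factorial : ℝ)) * Real.exp (c*y) := by
        apply mul_le_mul_of_nonneg_left (pow_div_factorial_le_exp _ (by positivity) n)
        have h1 : (0:ℝ) ≤ c ^ (η-1) * y ^ (η-1) / Real.Gamma η := by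
          apply div_nonneg (mul_nonneg (Real.rpow_nonneg hc.le _) (Real.rpow_nonneg hy _)) hgη.le
        have h2 : (0:ℝ) ≤ (c*x)^n / (n.factorial : ℝ) := by positivity
        exact mul_nonneg h1 h2
    _ = (c ^ (η-1) * y ^ (η-1) / Real.Gamma η * Real.exp (c*y)) *
      ((c*x)^n / (n.factorial : ℝ)) := by ring

lemma kt_abs_le (hη : 1 < η) (hc : 0 < c) :
    |kt η c x y n| ≤ kt η c |x| |y| n := by
  unfold kt
  have hd : (0:ℝ) < (n.factorial : ℝ) * Real.Gamma ((n:ℝ) + η) := by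
    have := gamma_pos hη n
    have : (0:ℝ) < (n.factorial : ℝ) := by exact_mod_cast Nat.factorial_pos n
    positivity
  rw [abs_div, abs_of_pos hd, abs_mul, abs_mul, abs_pow,
    abs_of_nonneg (Real.rpow_nonneg hc.le _)]
  apply div_le_div_of_nonneg_right _ hd.le
  apply mul_le_mul_of_nonneg_left (Real.abs_rpow_le_abs_rpow _ _)
  positivity

lemma kt_summable (hη : 1 < η) (hc : 0 < c) (x y : ℝ) :
    Summable (kt η c x y) := by
  have habs : Summable (fun n => kt η c |x| |y| n) := by
    apply Summable.of_nonneg_of_le (fun n => kt_nonneg hη hc (abs_nonneg x) (abs_nonneg y))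
      (fun n => kt_le_simple hη hc (abs_nonneg x) (abs_nonneg y))
    exact (Real.summable_pow_div_factorial (c * |x|)).mul_left _
  have : Summable (fun n => |kt η c x y n|) :=
    Summable.of_nonneg_of_le (fun n => abs_nonneg _) (fun n => kt_abs_le hη hc) habs
  exact this.of_abs

lemma kt_tsum_le (hη : 1 < η) (hc : 0 < c) (hx : 0 ≤ x) (hy : 0 ≤ y) :
    ∑' n, kt η c x y n ≤
      c ^ (η-1) * y ^ (η-1) / Real.Gamma η * Real.exp (c*y) * Real.exp (c*x) := by
  calc ∑' n, kt η c x y n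
      ≤ ∑' n, (c ^ (η-1) * y ^ (η-1) / Real.Gamma η * Real.exp (c*y)) *
          ((c*x)^n / (n.factorial : ℝ)) := by
        apply Summable.tsum_le_tsum (fun n => kt_le_simple hη hc hx hy) (kt_summable hη hc x y)
        exact (Real.summable_pow_div_factorial (c * x)).mul_left _
    _ = c ^ (η-1) * y ^ (η-1) / Real.Gamma η * Real.exp (c*y) * Real.exp (c*x) := by
        rw [tsum_mul_left, ← exp_tsum]

lemma besselKernel_eq (hJ : 0 < J) (x y : ℝ) :
    besselKernel η J x y
      = (2/J) * Real.exp (-(2/J*(x+y))) * ∑' n, kt η (2/J) x y n := by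
  unfold besselKernel kt
  rw [show -2*(x+y)/J = -(2/J*(x+y)) by ring]
  congr 1
  apply tsum_congr; intro n
  rw [Real.div_rpow (by norm_num) hJ.le]
  ring

lemma besselKernel_nonneg (hη : 1 < η) (hJ : 0 < J) (hx : 0 ≤ x) (hy : 0 ≤ y) :
    0 ≤ besselKernel η J x y := by
  have hc : (0:ℝ) < 2/J := by positivity
  rw [besselKernel_eq hJ]
  apply mul_nonneg (mul_nonneg hc.le (Real.exp_nonneg _))
  exact tsum_nonneg fun n => kt_nonneg hη hc hx hy

lemma besselKernel_le (hη : 1 < η) (hJ : 0 < J) (hx : 0 ≤ x) (hy : 0 ≤ y) :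
    besselKernel η J x y ≤ (2/J) ^ η * y ^ (η-1) / Real.Gamma η := by
  have hc : (0:ℝ) < 2/J := by positivity
  rw [besselKernel_eq hJ]
  calc (2/J) * Real.exp (-(2/J*(x+y))) * ∑' n, kt η (2/J) x y n
      ≤ (2/J) * Real.exp (-(2/J*(x+y))) *
        ((2/J) ^ (η-1) * y ^ (η-1) / Real.Gamma η * Real.exp (2/J*y) * Real.exp (2/J*x)) :=
        mul_le_mul_of_nonneg_left (kt_tsum_le hη hc hx hy) (by positivity)
    _ = ((2/J) * (2/J) ^ (η-1)) * (y ^ (η-1) / Real.Gamma η) *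
        (Real.exp (-(2/J*(x+y))) * Real.exp (2/J*y) * Real.exp (2/J*x)) := by ring
    _ = (2/J) ^ η * y ^ (η-1) / Real.Gamma η := by
        rw [← Real.exp_add, ← Real.exp_add, show -(2/J*(x+y)) + 2/J*y + 2/J*x = 0 by ring,
          Real.exp_zero, show (2/J) * (2/J) ^ (η-1) = (2/J) ^ η by
            have h : ((2:ℝ)/J) ^ ((1:ℝ) + (η-1)) = (2/J)^(1:ℝ) * (2/J)^(η-1) :=
              Real.rpow_add hc 1 (η-1)
            rw [Real.rpow_one, show (1:ℝ)+(η-1) = η by ring] at h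
            exact h.symm]
        ring

lemma continuous_kt (hη : 1 < η) (c x : ℝ) (n : ℕ) :
    Continuous fun y => kt η c x y n := by
  unfold kt
  exact ((continuous_const.mul (Real.continuous_rpow_const (by
    have := Nat.cast_nonneg (α := ℝ) n; linarith))).div_const _)

lemma measurable_besselKernel (hη : 1 < η) (hJ : 0 < J) :
    Measurable fun p : ℝ × ℝ => besselKernel η J p.1 p.2 := by
  simp_rw [besselKernel_eq hJ]
  apply Measurable.mul
  · apply Measurable.mul measurable_const
    exact (Real.continuous_exp.comp
      ((continuous_const.mul (continuous_fst.add continuous_snd)).neg)).measurable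
  · apply measurable_of_tendsto_metrizable
      (f := fun N (p : ℝ × ℝ) => ∑ n ∈ Finset.range N, kt η (2/J) p.1 p.2 n)
    · intro N
      apply Finset.measurable_sum
      intro n _
      have : (fun p : ℝ × ℝ => kt η (2/J) p.1 p.2 n) =
          fun p : ℝ × ℝ => (2/J) ^ (2*(n:ℝ)+η-1) * p.1 ^ n * p.2 ^ ((n:ℝ)+η-1) /
            ((n.factorial : ℝ) * Real.Gamma ((n:ℝ) + η)) := rfl
      rw [this]
      apply Measurable.div_const
      apply Measurable.mul
      · exact (measurable_fst.pow_const n).const_mul _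
      · exact (Real.continuous_rpow_const (by
          have := Nat.cast_nonneg (α := ℝ) n; linarith)).measurable.comp measurable_snd
    · rw [tendsto_pi_nhds]
      intro p
      exact (kt_summable hη (by positivity) p.1 p.2).hasSum.tendsto_sum_nat

lemma succ_term_eq (u : ℝ) (n : ℕ) :
    (((n+1:ℕ)):ℝ) * u^(n+1) / ((n+1).factorial : ℝ) = u * (u^n / (n.factorial : ℝ)) := by
  have h : ((n.factorial : ℝ)) ≠ 0 := by exact_mod_cast (Nat.factorial_pos n).ne'
  rw [Nat.factorial_succ]
  push_cast
  field_simp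
  ring

lemma summable_n_mul (u : ℝ) : Summable (fun n : ℕ => (n:ℝ) * u^n / (n.factorial : ℝ)) := by
  apply (summable_nat_add_iff 1).mp
  exact ((Real.summable_pow_div_factorial u).mul_left u).congr
    fun n => (succ_term_eq u n).symm

lemma tsum_n_mul (u : ℝ) :
    ∑' n : ℕ, (n:ℝ) * u^n / (n.factorial : ℝ) = u * Real.exp u := by
  rw [Summable.tsum_eq_zero_add (summable_n_mul u)]
  simp only [Nat.cast_zero, zero_mul, zero_div, zero_add]
  calc ∑' n : ℕ, ((n+1:ℕ):ℝ) * u^(n+1) / ((n+1).factorial : ℝ)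
      = ∑' n : ℕ, u * (u^n / (n.factorial : ℝ)) := tsum_congr fun n => succ_term_eq u n
    _ = u * Real.exp u := by rw [tsum_mul_left, ← exp_tsum]

lemma summable_weighted (η u : ℝ) :
    Summable (fun n : ℕ => u^n * ((n:ℝ)+η) / (n.factorial : ℝ)) := by
  have h : (fun n : ℕ => u^n * ((n:ℝ)+η) / (n.factorial : ℝ)) =
      fun n : ℕ => (n:ℝ) * u^n / (n.factorial : ℝ) + η * (u^n / (n.factorial : ℝ)) := by
    funext n; field_simp
  rw [h]
  exact (summable_n_mul u).add ((Real.summable_pow_div_factorial u).mul_left η)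

lemma tsum_weighted (η u : ℝ) :
    ∑' n : ℕ, u^n * ((n:ℝ)+η) / (n.factorial : ℝ) = (u + η) * Real.exp u := by
  have h : (fun n : ℕ => u^n * ((n:ℝ)+η) / (n.factorial : ℝ)) =
      fun n : ℕ => (n:ℝ) * u^n / (n.factorial : ℝ) + η * (u^n / (n.factorial : ℝ)) := by
    funext n; field_simp
  rw [h, Summable.tsum_add (summable_n_mul u) ((Real.summable_pow_div_factorial u).mul_left η),
    tsum_n_mul, tsum_mul_left, ← exp_tsum]
  ring

lemma gterm_eq (hη : 1 < η) (hc : 0 < c) (hy : 0 < y) (x : ℝ) (n : ℕ) :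
    (y * (c * Real.exp (-(c*(x+y))))) * kt η c x y n
      = (c * Real.exp (-(c*x)) * (c ^ (2*(n:ℝ)+η-1) * x^n /
          ((n.factorial:ℝ) * Real.Gamma ((n:ℝ)+η))))
        * (y ^ ((n:ℝ)+η) * Real.exp (-(c*y))) := by
  unfold kt
  have hyy : y * y ^ ((n:ℝ)+η-1) = y ^ ((n:ℝ)+η) := by
    nth_rewrite 1 [← Real.rpow_one y]
    rw [← Real.rpow_add hy]
    congr 1; ring
  have hee : Real.exp (-(c*(x+y))) = Real.exp (-(c*x)) * Real.exp (-(c*y)) := by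
    rw [← Real.exp_add]; congr 1; ring
  rw [hee, ← hyy]; ring

lemma gterm_integrableOn (hη : 1 < η) (hc : 0 < c) (Cn : ℝ) (n : ℕ) :
    IntegrableOn (fun y => Cn * (y ^ ((n:ℝ)+η) * Real.exp (-(c*y)))) (Ioi (0:ℝ)) := by
  apply Integrable.const_mul
  have hn : (0:ℝ) ≤ (n:ℝ) := Nat.cast_nonneg n
  have h := integrableOn_rpow_mul_exp_neg_mul_rpow (s := (n:ℝ)+η) (p := 1)
    (by linarith) one_pos hc
  simpa [Real.rpow_one, neg_mul, IntegrableOn] using h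

lemma gterm_value (hη : 1 < η) (hc : 0 < c) (hx : 0 ≤ x) (n : ℕ) :
    ∫ y in Ioi (0:ℝ),
      (c * Real.exp (-(c*x)) * (c ^ (2*(n:ℝ)+η-1) * x^n /
          ((n.factorial:ℝ) * Real.Gamma ((n:ℝ)+η))))
        * (y ^ ((n:ℝ)+η) * Real.exp (-(c*y)))
      = (Real.exp (-(c*x)) / c) * ((c*x)^n * ((n:ℝ)+η) / (n.factorial : ℝ)) := by
  have hn : (0:ℝ) ≤ (n:ℝ) := Nat.cast_nonneg n
  rw [integral_const_mul]
  have hint : ∫ y in Ioi (0:ℝ), y ^ ((n:ℝ)+η) * Real.exp (-(c*y))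
      = (1/c) ^ ((n:ℝ)+η+1) * Real.Gamma ((n:ℝ)+η+1) := by
    have h := Real.integral_rpow_mul_exp_neg_mul_Ioi (a := (n:ℝ)+η+1) (r := c)
      (by linarith) hc
    simpa [show (n:ℝ)+η+1-1 = (n:ℝ)+η by ring] using h
  rw [hint, Real.Gamma_add_one (ne_of_gt (by linarith : (0:ℝ) < (n:ℝ)+η)),
    one_div, Real.inv_rpow hc.le]
  have hg := gamma_pos hη n
  have hfac : ((n.factorial:ℝ)) ≠ 0 := by exact_mod_cast (Nat.factorial_pos n).ne'
  have h2 : c ^ ((2:ℝ)) = c * c := by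
    rw [show (2:ℝ) = 1+1 by norm_num, Real.rpow_add hc, Real.rpow_one]
  have key : c ^ (2*(n:ℝ)+η-1) = (c^n / (c*c)) * c ^ ((n:ℝ)+η+1) := by
    calc c ^ (2*(n:ℝ)+η-1) = c ^ ((n:ℝ)-2 + ((n:ℝ)+η+1)) := by
          rw [show (n:ℝ)-2+((n:ℝ)+η+1) = 2*(n:ℝ)+η-1 by ring]
      _ = c ^ ((n:ℝ)-2) * c ^ ((n:ℝ)+η+1) := Real.rpow_add hc _ _
      _ = (c^n / (c*c)) * c ^ ((n:ℝ)+η+1) := by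
          rw [Real.rpow_sub hc, Real.rpow_natCast, h2]
  rw [key, mul_pow]
  have hP : c ^ ((n:ℝ)+η+1) ≠ 0 := (Real.rpow_pos_of_pos hc _).ne'
  field_simp

lemma lintegral_A (hη : 1 < η) (hJ : 0 < J) (hx : 0 ≤ x) :
    ∫⁻ y in Ioi (0:ℝ), ENNReal.ofReal (y * besselKernel η J x y)
      = ENNReal.ofReal (x + η * J / 2) := by
  have hc : (0:ℝ) < 2/J := by positivity
  set c := 2/J with hcdef
  set Cf : ℕ → ℝ := fun n => c * Real.exp (-(c*x)) * (c ^ (2*(n:ℝ)+η-1) * x^n /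
    ((n.factorial:ℝ) * Real.Gamma ((n:ℝ)+η))) with hCf
  have hCfnn : ∀ n, 0 ≤ Cf n := by
    intro n
    have hg := gamma_pos hη n
    have : (0:ℝ) ≤ c ^ (2*(n:ℝ)+η-1) := Real.rpow_nonneg hc.le _
    apply mul_nonneg (by positivity)
    apply div_nonneg (mul_nonneg this (pow_nonneg hx n))
    exact mul_nonneg (Nat.cast_nonneg _) hg.le
  have hpt : ∀ y ∈ Ioi (0:ℝ), ENNReal.ofReal (y * besselKernel η J x y)
      = ∑' n, ENNReal.ofReal (Cf n * (y ^ ((n:ℝ)+η) * Real.exp (-(c*y)))) := by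
    intro y hy
    have hy0 : (0:ℝ) < y := hy
    have h1 : y * besselKernel η J x y
        = ∑' n, Cf n * (y ^ ((n:ℝ)+η) * Real.exp (-(c*y))) := by
      rw [besselKernel_eq hJ, ← hcdef,
        show y * (c * Real.exp (-(c*(x+y))) * ∑' n, kt η c x y n)
          = (y * (c * Real.exp (-(c*(x+y))))) * ∑' n, kt η c x y n by ring,
        ← tsum_mul_left]
      exact tsum_congr fun n => gterm_eq hη hc hy0 x n
    rw [h1]
    apply ENNReal.ofReal_tsum_of_nonneg
    · intro n
      apply mul_nonneg (hCfnn n)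
      exact mul_nonneg (Real.rpow_nonneg hy0.le _) (Real.exp_nonneg _)
    · apply Summable.congr (((kt_summable hη hc x y).mul_left
        (y * (c * Real.exp (-(c*(x+y)))))))
      exact fun n => gterm_eq hη hc hy0 x n
  rw [setLIntegral_congr_fun measurableSet_Ioi hpt]
  have hmeas : ∀ n : ℕ, AEMeasurable
      (fun y : ℝ => ENNReal.ofReal (Cf n * (y ^ ((n:ℝ)+η) * Real.exp (-(c*y)))))
      ((volume : Measure ℝ).restrict (Ioi 0)) := by
    intro n
    have hn : (0:ℝ) ≤ (n:ℝ) := Nat.cast_nonneg n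
    apply Measurable.aemeasurable
    apply Measurable.ennreal_ofReal
    exact (continuous_const.mul ((Real.continuous_rpow_const (by linarith)).mul
      (Real.continuous_exp.comp (continuous_const.mul continuous_id).neg))).measurable
  rw [lintegral_tsum hmeas]
  have hterm : ∀ n : ℕ, ∫⁻ y in Ioi (0:ℝ),
      ENNReal.ofReal (Cf n * (y ^ ((n:ℝ)+η) * Real.exp (-(c*y))))
      = ENNReal.ofReal ((Real.exp (-(c*x)) / c) * ((c*x)^n * ((n:ℝ)+η) / (n.factorial : ℝ))) := by
    intro n
    rw [← MeasureTheory.ofReal_integral_eq_lintegral_ofReal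
      (gterm_integrableOn hη hc (Cf n) n)]
    · rw [hCf]; rw [gterm_value hη hc hx n]
    · filter_upwards [ae_restrict_mem measurableSet_Ioi] with y hy
      exact mul_nonneg (hCfnn n)
        (mul_nonneg (Real.rpow_nonneg (le_of_lt hy) _) (Real.exp_nonneg _))
  rw [tsum_congr hterm]
  have vnn : ∀ n : ℕ, 0 ≤ (Real.exp (-(c*x)) / c) * ((c*x)^n * ((n:ℝ)+η) / (n.factorial : ℝ)) := by
    intro n
    have hn : (0:ℝ) ≤ (n:ℝ) := Nat.cast_nonneg n
    have h1 : (0:ℝ) ≤ (c*x)^n := pow_nonneg (by positivity) n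
    have h2 : (0:ℝ) ≤ (n:ℝ)+η := by linarith
    positivity
  rw [← ENNReal.ofReal_tsum_of_nonneg vnn
    ((summable_weighted η (c*x)).mul_left _)]
  rw [tsum_mul_left, tsum_weighted]
  congr 1
  have hex : Real.exp (-(c*x)) * Real.exp (c*x) = 1 := by
    rw [← Real.exp_add]; simp
  have hη2 : η * J / 2 = η / c := by rw [hcdef]; field_simp
  rw [hη2]
  field_simp
  linear_combination hex

lemma ae_nonneg_of_prob (μ : Measure ℝ) [IsProbabilityMeasure μ] (h0 : μ (Ici 0) = 1) :
    ∀ᵐ x ∂μ, 0 ≤ x := by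
  have hcompl : μ (Ici (0:ℝ))ᶜ = 0 := by
    rw [measure_compl measurableSet_Ici (measure_ne_top μ _), h0, measure_univ, tsub_self]
  rw [ae_iff]
  have hset : {x : ℝ | ¬ (0:ℝ) ≤ x} = (Ici (0:ℝ))ᶜ := by ext x; simp [not_le]
  rw [hset]; exact hcompl

lemma integrable_kernel (hη : 1 < η) (hJ : 0 < J) (μ : Measure ℝ) [IsProbabilityMeasure μ]
    (h0 : μ (Ici 0) = 1) (hy : 0 ≤ y) :
    Integrable (fun x => besselKernel η J x y) μ := by
  apply Integrable.mono' (integrable_const ((2/J) ^ η * y ^ (η-1) / Real.Gamma η))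
  · exact ((measurable_besselKernel hη hJ).comp
      (measurable_id.prodMk measurable_const)).aestronglyMeasurable
  · filter_upwards [ae_nonneg_of_prob μ h0] with x hx
    rw [Real.norm_eq_abs, abs_of_nonneg (besselKernel_nonneg hη hJ hx hy)]
    exact besselKernel_le hη hJ hx hy

lemma moment_solMeasure (hη : 1 < η) (hJ : 0 < J) (lam : Measure ℝ) [IsProbabilityMeasure lam]
    (h0 : lam (Ici 0) = 1) (hmom : Integrable (fun x : ℝ => x) lam) :
    ∫ y, y ∂(solMeasure η lam J) = (∫ x, x ∂lam) + η * J / 2 := by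
  set f : ℝ → ℝ≥0∞ := fun y => ENNReal.ofReal (∫ x, besselKernel η J x y ∂lam) with hf
  have hFmeas : Measurable fun y : ℝ => ∫ x, besselKernel η J x y ∂lam := by
    have hG : Measurable fun p : ℝ × ℝ => besselKernel η J p.2 p.1 :=
      Measurable.comp (g := fun q : ℝ × ℝ => besselKernel η J q.1 q.2)
        (f := fun p : ℝ × ℝ => (p.2, p.1)) (measurable_besselKernel hη hJ)
        (measurable_snd.prodMk measurable_fst)
    exact (MeasureTheory.StronglyMeasurable.integral_prod_right'
      (f := fun p : ℝ × ℝ => besselKernel η J p.2 p.1) hG.stronglyMeasurable).measurable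
  have hfmeas : Measurable f := hFmeas.ennreal_ofReal
  have hρIio : (solMeasure η lam J) (Iio 0) = 0 := by
    rw [solMeasure, withDensity_apply _ measurableSet_Iio,
      Measure.restrict_restrict measurableSet_Iio]
    have hempty : Iio (0:ℝ) ∩ Ici 0 = ∅ := by
      ext z
      simp only [mem_inter_iff, mem_Iio, mem_Ici, mem_empty_iff_false, iff_false, not_and, not_le]
      exact fun h => h
    rw [hempty, Measure.restrict_empty, lintegral_zero_measure]
  have hnn : 0 ≤ᵐ[solMeasure η lam J] (fun y : ℝ => y) := by
    rw [Filter.EventuallyLE, ae_iff]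
    have hset : {y : ℝ | ¬ (0:ℝ) ≤ y} = Iio (0:ℝ) := by ext y; simp [not_le]
    simp only [Pi.zero_apply]; rw [hset]; exact hρIio
  rw [integral_eq_lintegral_of_nonneg_ae hnn aestronglyMeasurable_id]
  have h1 : ∫⁻ y, ENNReal.ofReal y ∂(solMeasure η lam J)
      = ∫⁻ y in Ioi (0:ℝ), f y * ENNReal.ofReal y := by
    rw [solMeasure, lintegral_withDensity_eq_lintegral_mul₀ hfmeas.aemeasurable
      ENNReal.measurable_ofReal.aemeasurable, MeasureTheory.restrict_Ioi_eq_restrict_Ici]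
    rfl
  have hkmeas : Measurable fun p : ℝ × ℝ => besselKernel η J p.2 p.1 :=
    Measurable.comp (g := fun q : ℝ × ℝ => besselKernel η J q.1 q.2)
      (f := fun p : ℝ × ℝ => (p.2, p.1)) (measurable_besselKernel hη hJ)
      (measurable_snd.prodMk measurable_fst)
  have h2 : ∫⁻ y in Ioi (0:ℝ), f y * ENNReal.ofReal y
      = ∫⁻ y in Ioi (0:ℝ), ∫⁻ x, ENNReal.ofReal (besselKernel η J x y) * ENNReal.ofReal y ∂lam := by
    apply setLIntegral_congr_fun measurableSet_Ioi
    intro y hy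
    simp only [hf]
    rw [MeasureTheory.ofReal_integral_eq_lintegral_ofReal (integrable_kernel hη hJ lam h0 hy.le)
      ((ae_nonneg_of_prob lam h0).mono fun x hx => besselKernel_nonneg hη hJ hx hy.le)]
    have hmx : Measurable fun x : ℝ => besselKernel η J x y :=
      Measurable.comp (g := fun q : ℝ × ℝ => besselKernel η J q.2 q.1)
        (f := fun x : ℝ => (y, x)) hkmeas (measurable_const.prodMk measurable_id)
    rw [← lintegral_mul_const'' _ (hmx.ennreal_ofReal.aemeasurable (μ := lam))]
  have h3 : ∫⁻ y in Ioi (0:ℝ), ∫⁻ x, ENNReal.ofReal (besselKernel η J x y) * ENNReal.ofReal y ∂lam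
      = ∫⁻ x, (∫⁻ y in Ioi (0:ℝ), ENNReal.ofReal (besselKernel η J x y) * ENNReal.ofReal y) ∂lam := by
    exact lintegral_lintegral_swap (μ := (volume : Measure ℝ).restrict (Ioi 0)) (ν := lam)
      (f := fun y x => ENNReal.ofReal (besselKernel η J x y) * ENNReal.ofReal y)
      (hkmeas.ennreal_ofReal.mul measurable_fst.ennreal_ofReal).aemeasurable
  have hinner : ∀ᵐ x ∂lam,
      (∫⁻ y in Ioi (0:ℝ), ENNReal.ofReal (besselKernel η J x y) * ENNReal.ofReal y)
        = ENNReal.ofReal (x + η * J / 2) := by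
    filter_upwards [ae_nonneg_of_prob lam h0] with x hx
    rw [← lintegral_A hη hJ hx]
    apply setLIntegral_congr_fun measurableSet_Ioi
    intro y hy
    beta_reduce
    rw [mul_comm, ← ENNReal.ofReal_mul hy.le]
  have h4 : ∫⁻ x, (∫⁻ y in Ioi (0:ℝ),
      ENNReal.ofReal (besselKernel η J x y) * ENNReal.ofReal y) ∂lam
      = ENNReal.ofReal ((∫ x, x ∂lam) + η * J / 2) := by
    have h5 : ∫⁻ x, (∫⁻ y in Ioi (0:ℝ),
        ENNReal.ofReal (besselKernel η J x y) * ENNReal.ofReal y) ∂lam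
        = ∫⁻ x, ENNReal.ofReal (x + η * J / 2) ∂lam := lintegral_congr_ae hinner
    rw [h5]
    have hint : Integrable (fun x : ℝ => x + η * J / 2) lam := hmom.add (integrable_const _)
    have h6 : ENNReal.ofReal (∫ x, (x + η * J / 2) ∂lam)
        = ∫⁻ x, ENNReal.ofReal (x + η * J / 2) ∂lam :=
      MeasureTheory.ofReal_integral_eq_lintegral_ofReal hint
        ((ae_nonneg_of_prob lam h0).mono fun x hx => by
          simp only [Pi.zero_apply]
          have : 0 < η * J / 2 := by positivity
          linarith)
    rw [← h6]
    congr 1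
    rw [integral_add hmom (integrable_const _), integral_const, probReal_univ]
    simp
  rw [h1, h2, h3, h4, ENNReal.toReal_ofReal]
  have : 0 ≤ ∫ x, x ∂lam := integral_nonneg_of_ae (ae_nonneg_of_prob lam h0)
  have : 0 < η * J / 2 := by positivity
  linarith

end BesselProof

/-- The first moment of the explicitly given path: `∫ y ρ(t)(dy) = m_λ e^{ηt/2}` for all
`t ∈ [0,T]`, where `ρ(0) = λ` and `ρ(t)` has density `y ↦ ∫ k_{J(t)}(x,y) λ(dx)` on
`[0,∞)` for `t ∈ (0,T]`, with `J(t) = (2 m_λ/η)(e^{ηt/2} − 1)`. -/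
theorem explicit_path_first_moment
    (η T : ℝ) (hη : 1 < η) (hT : 0 < T)
    (lam : ProbabilityMeasure ℝ) (hlam : (lam : Measure ℝ) (Set.Ici 0) = 1)
    (hmom : Integrable (fun x : ℝ => x) (lam : Measure ℝ))
    (mlam : ℝ) (hmlam : mlam = ∫ x, x ∂(lam : Measure ℝ)) (hmpos : 0 < mlam)
    (ρ : ℝ → Measure ℝ) (hρ0 : ρ 0 = (lam : Measure ℝ))
    (hρ : ∀ t ∈ Set.Ioc (0:ℝ) T,
      ρ t = solMeasure η (lam : Measure ℝ) (2 * mlam / η * (Real.exp (η * t / 2) - 1))) :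
    ∀ t ∈ Set.Icc (0:ℝ) T, (∫ y, y ∂(ρ t)) = mlam * Real.exp (η * t / 2) := by
  intro t ht
  rcases eq_or_lt_of_le ht.1 with h0 | h0
  · rw [← h0, hρ0]
    simp only [mul_zero, zero_div, zero_mul, Real.exp_zero, mul_one]
    exact hmlam.symm
  · rw [hρ t ⟨h0, ht.2⟩]
    have hη0 : (0:ℝ) < η := by linarith
    have hE : 1 < Real.exp (η * t / 2) := by
      have h := Real.exp_lt_exp.mpr (show (0:ℝ) < η * t / 2 by positivity)
      simpa [Real.exp_zero] using h
    have hJ : 0 < 2 * mlam / η * (Real.exp (η * t / 2) - 1) := by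
      have : 0 < Real.exp (η * t / 2) - 1 := by linarith
      positivity
    rw [BesselProof.moment_solMeasure hη hJ (lam : Measure ℝ) hlam hmom, ← hmlam]
    have hne : η ≠ 0 := ne_of_gt hη0
    field_simp
    ring
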